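/- Define f(z) = (2e^z + z + 1)/(e^z + 1). Then f and f' share the value 1 CM in the sense that (f'(z) − 1)/(f(z) − 1) extends to a nonvanishing holomorphic function on the domain where e^z ≠ −1, but there is no nonzero constant c with f' − 1 = c·(f − 1). -/

import Mathlib

open Complex

lemma deriv_aux (f : ℂ → ℂ)
    (hf : ∀ z : ℂ, f z = (2 * exp z + z + 1) / (exp z + 1))
    {z : ℂ} (h : exp z + 1 ≠ 0) :
    deriv f z = ((2 * exp z + 1) * (exp z + 1) - (2 * exp z + z + 1) * exp z)
      / (exp z + 1) ^ 2 := by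
  have hF : f = fun w => (2 * exp w + w + 1) / (exp w + 1) := funext hf
  have hn : HasDerivAt (fun w : ℂ => 2 * exp w + w + 1) (2 * exp z + 1) z := by
    have h1 : HasDerivAt (fun w : ℂ => 2 * exp w + w) (2 * exp z + 1) z :=
      ((Complex.hasDerivAt_exp z).const_mul 2).add (hasDerivAt_id z)
    simpa using h1.add_const 1
  have hd : HasDerivAt (fun w : ℂ => exp w + 1) (exp z) z := by
    simpa using (Complex.hasDerivAt_exp z).add_const 1
  have := (hn.div hd h).deriv
  rw [hF]
  exact this

theorem stmt_8 (f : ℂ → ℂ)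
    (hf : ∀ z : ℂ, f z = (2 * exp z + z + 1) / (exp z + 1)) :
    (∃ g : ℂ → ℂ, DifferentiableOn ℂ g {z : ℂ | exp z ≠ -1} ∧
      (∀ z ∈ {z : ℂ | exp z ≠ -1}, g z ≠ 0) ∧
      (∀ z ∈ {z : ℂ | exp z ≠ -1}, deriv f z - 1 = g z * (f z - 1))) ∧
    ¬∃ c : ℂ, c ≠ 0 ∧ ∀ z ∈ {z : ℂ | exp z ≠ -1}, deriv f z - 1 = c * (f z - 1) := by
  have key : ∀ z ∈ {z : ℂ | exp z ≠ -1},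
      deriv f z - 1 = (-exp z / (exp z + 1)) * (f z - 1) := by
    intro z hz
    have h : exp z + 1 ≠ 0 := by
      intro h0
      exact hz (by linear_combination h0)
    rw [deriv_aux f hf h, hf z]
    field_simp
    ring
  constructor
  · refine ⟨fun z => -exp z / (exp z + 1), ?_, ?_, key⟩
    · apply DifferentiableOn.div
      · exact (Complex.differentiable_exp.neg).differentiableOn
      · exact (Complex.differentiable_exp.add_const 1).differentiableOn
      · intro z hz h0
        exact hz (by linear_combination h0)
    · intro z hz
      have h : exp z + 1 ≠ 0 := fun h0 => hz (by linear_combination h0)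
      exact div_ne_zero (neg_ne_zero.mpr (Complex.exp_ne_zero z)) h
  · rintro ⟨c, hc, hrel⟩
    -- evaluate at z = 0 and z = log 2
    have h0 : (0 : ℂ) ∈ {z : ℂ | exp z ≠ -1} := by
      simp [Complex.exp_zero]
      norm_num
    have hz2 : exp ((Real.log 2 : ℝ) : ℂ) = 2 := by
      rw [← Complex.ofReal_exp, Real.exp_log (by norm_num)]
      norm_num
    have h2 : ((Real.log 2 : ℝ) : ℂ) ∈ {z : ℂ | exp z ≠ -1} := by
      show exp _ ≠ -1
      rw [hz2]
      norm_num
    have e0 := hrel 0 h0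
    rw [key 0 h0] at e0
    have e2 := hrel _ h2
    rw [key _ h2] at e2
    -- f 0 - 1 = 1/2 ≠ 0, so c = -1/2
    have hf0 : f 0 - 1 = 1 / 2 := by
      rw [hf 0]; simp [Complex.exp_zero]; norm_num
    have hf2 : f ((Real.log 2 : ℝ) : ℂ) - 1 = (2 + (Real.log 2 : ℂ)) / 3 := by
      rw [hf _, hz2]; field_simp; ring
    rw [hf0, Complex.exp_zero] at e0
    rw [hf2, hz2] at e2
    have hc0 : c = -(1 / 2) := by
      field_simp at e0
      linear_combination (-1/2 : ℂ) * e0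
    have hlog : (2 + (Real.log 2 : ℂ)) ≠ 0 := by
      intro h
      have : (2 + Real.log 2 : ℝ) = 0 := by
        exact_mod_cast (by exact_mod_cast h : ((2 + Real.log 2 : ℝ) : ℂ) = 0)
      nlinarith [Real.log_pos (by norm_num : (1:ℝ) < 2)]
    have ht : (2 + (Real.log 2 : ℂ)) / 3 ≠ 0 := div_ne_zero hlog (by norm_num)
    have hc2 : c = -(2 / 3) := by
      have h := mul_right_cancel₀ ht e2
      rw [← h]; norm_num
    rw [hc0] at hc2
    norm_num at hc2
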